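/- Let x ∈ (0,1] be such that the sequence ℓ ↦ (2^{n_1}+⋯+2^{n_ℓ}−ℓ)/(n_1+⋯+n_ℓ) converges to α as ℓ → ∞, where the binary expansion of x is [0^{n_1-1}1 0^{n_2-1}1 ⋯]. Then 2^{n_{ℓ+1}} = o(n_1+⋯+n_ℓ) as ℓ → ∞, and consequently lim_{n→∞} S_n(x)/n = α. -/

import Mathlib

open Filter Set MeasureTheory
open scoped ENNReal Classical

/-- The doubling map on `(0,1]`. -/
noncomputable def T (x : ℝ) : ℝ := 2 * x - ⌈2 * x⌉ + 1

/-- The Saint-Petersburg potential: `phi x = 2^k` for `x ∈ (2^{-k-1}, 2^{-k}]`. -/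
noncomputable def phi (x : ℝ) : ℝ := 2 ^ ⌊Real.logb 2 x⁻¹⌋

/-- Birkhoff sums of the Saint-Petersburg potential under the doubling map. -/
noncomputable def S (n : ℕ) (x : ℝ) : ℝ := ∑ j ∈ Finset.range n, phi (T^[j] x)

/-- The `n`-th binary digit of `x` (for `n ≥ 1`): `eps n x = ⌈2 T^{n-1} x⌉ - 1`. -/
noncomputable def eps (n : ℕ) (x : ℝ) : ℤ := ⌈2 * T^[n-1] x⌉ - 1

lemma T_mem (y : ℝ) : T y ∈ Set.Ioc (0:ℝ) 1 := by
  have h1 := Int.ceil_lt_add_one (2*y)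
  have h2 := Int.le_ceil (2*y)
  constructor <;> [skip; skip] <;> unfold T <;> push_cast at * <;> linarith

lemma iter_mem {x : ℝ} (hx : x ∈ Set.Ioc (0:ℝ) 1) (j : ℕ) : T^[j] x ∈ Set.Ioc (0:ℝ) 1 := by
  induction j with
  | zero => exact hx
  | succ k ih => rw [Function.iterate_succ_apply']; exact T_mem _

lemma eps_one_eq_one {y : ℝ} (h : 1/2 < y) (h1 : y ≤ 1) : eps 1 y = 1 := by
  have : ⌈2*y⌉ = 2 := by rw [Int.ceil_eq_iff]; constructor <;> push_cast <;> linarith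
  simp [eps, this]

lemma eps_one_eq_zero {y : ℝ} (h0 : 0 < y) (h : y ≤ 1/2) : eps 1 y = 0 := by
  have : ⌈2*y⌉ = 1 := by rw [Int.ceil_eq_iff]; constructor <;> push_cast <;> linarith
  simp [eps, this]

lemma T_eq {y : ℝ} (h0 : 0 < y) (h : y ≤ 1/2) : T y = 2*y := by
  have : ⌈2*y⌉ = 1 := by rw [Int.ceil_eq_iff]; constructor <;> push_cast <;> linarith
  simp [T, this]

lemma phi_one {y : ℝ} (h : 1/2 < y) (h1 : y ≤ 1) : phi y = 1 := by
  have hy0 : 0 < y := by linarith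
  have hfl : ⌊Real.logb 2 y⁻¹⌋ = 0 := by
    rw [Int.floor_eq_zero_iff]
    constructor
    · exact Real.logb_nonneg one_lt_two (by rw [le_inv_comm₀] <;> linarith)
    · have : y⁻¹ < 2 := by rw [inv_lt_comm₀] <;> linarith
      calc Real.logb 2 y⁻¹ < Real.logb 2 2 := by
            apply Real.logb_lt_logb one_lt_two (by positivity) this
        _ = 1 := Real.logb_self_eq_one one_lt_two
  unfold phi; rw [hfl, zpow_zero]

lemma phi_double {y : ℝ} (h0 : 0 < y) (h : y ≤ 1/2) : phi y = 2 * phi (2*y) := by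
  have hy : y ≠ 0 := ne_of_gt h0
  have key : Real.logb 2 (2*y)⁻¹ = Real.logb 2 y⁻¹ - 1 := by
    rw [mul_inv, Real.logb_mul (by norm_num) (inv_ne_zero hy)]
    rw [Real.logb_inv, Real.logb_self_eq_one one_lt_two]; ring
  have : ⌊Real.logb 2 (2*y)⁻¹⌋ = ⌊Real.logb 2 y⁻¹⌋ - 1 := by
    rw [key]; exact_mod_cast Int.floor_sub_intCast (Real.logb 2 y⁻¹) 1
  unfold phi
  rw [this, zpow_sub₀ (by norm_num : (2:ℝ) ≠ 0)]
  ring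

lemma phi_pos (y : ℝ) : 0 < phi y := by unfold phi; positivity

lemma eps_shift {i : ℕ} (hi : 1 ≤ i) (j : ℕ) (y : ℝ) : eps i (T^[j] y) = eps (j + i) y := by
  unfold eps
  rw [show j + i - 1 = (i-1) + j from by omega, Function.iterate_add_apply]

lemma le_half_of_eps_ne_one {y : ℝ} (hy : y ∈ Set.Ioc (0:ℝ) 1) (h : eps 1 y ≠ 1) : y ≤ 1/2 := by
  by_contra hc
  exact h (eps_one_eq_one (by linarith) hy.2)

lemma phi_first : ∀ m : ℕ, ∀ y : ℝ, y ∈ Set.Ioc (0:ℝ) 1 →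
    (∀ i, 1 ≤ i → i ≤ m → eps i y ≠ 1) → eps (m+1) y = 1 → phi y = 2^m := by
  intro m
  induction m with
  | zero =>
    intro y hy _ h1
    have : 1/2 < y := by
      by_contra hc
      push_neg at hc
      rw [eps_one_eq_zero hy.1 hc] at h1; norm_num at h1
    simpa using phi_one this hy.2
  | succ m ih =>
    intro y hy hz h1
    have hhalf : y ≤ 1/2 := le_half_of_eps_ne_one hy (hz 1 le_rfl (by omega))
    have hT : T y = 2*y := T_eq hy.1 hhalf
    have hTy : T y ∈ Set.Ioc (0:ℝ) 1 := T_mem y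
    have hsh : ∀ i, 1 ≤ i → eps i (T y) = eps (1 + i) y := by
      intro i hi
      have := eps_shift hi 1 y
      simpa using this
    have ihz : ∀ i, 1 ≤ i → i ≤ m → eps i (T y) ≠ 1 := by
      intro i hi him
      rw [hsh i hi]
      exact hz (1+i) (by omega) (by omega)
    have ih1 : eps (m+1) (T y) = 1 := by
      rw [hsh (m+1) (by omega)]
      rw [show 1 + (m+1) = m + 1 + 1 from by omega]
      exact h1
    have := ih (T y) hTy ihz ih1
    rw [hT] at this
    rw [phi_double hy.1 hhalf, this]
    ring

lemma sum_first : ∀ m : ℕ, ∀ y : ℝ, y ∈ Set.Ioc (0:ℝ) 1 →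
    (∀ i, 1 ≤ i → i ≤ m → eps i y ≠ 1) → eps (m+1) y = 1 →
    ∑ j ∈ Finset.range (m+1), phi (T^[j] y) = 2^(m+1) - 1 := by
  intro m
  induction m with
  | zero =>
    intro y hy hz h1
    simp [phi_first 0 y hy hz h1]
    norm_num
  | succ m ih =>
    intro y hy hz h1
    have hhalf : y ≤ 1/2 := le_half_of_eps_ne_one hy (hz 1 le_rfl (by omega))
    have hTy : T y ∈ Set.Ioc (0:ℝ) 1 := T_mem y
    have hsh : ∀ i, 1 ≤ i → eps i (T y) = eps (1 + i) y := by
      intro i hi; simpa using eps_shift hi 1 y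
    have ihz : ∀ i, 1 ≤ i → i ≤ m → eps i (T y) ≠ 1 := by
      intro i hi him; rw [hsh i hi]; exact hz (1+i) (by omega) (by omega)
    have ih1 : eps (m+1) (T y) = 1 := by
      rw [hsh (m+1) (by omega), show 1 + (m+1) = m + 1 + 1 from by omega]; exact h1
    have hsum := ih (T y) hTy ihz ih1
    have hphi := phi_first (m+1) y hy hz h1
    rw [Finset.sum_range_succ']
    simp only [Function.iterate_succ_apply, Function.iterate_zero_apply]
    rw [hsum, hphi]
    ring

lemma sq_le_two_pow (m : ℕ) : m^2 ≤ 2^(m+2) := by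
  induction m with
  | zero => simp
  | succ k ih =>
    have h1 : k < 2^k := Nat.lt_two_pow_self (n := k)
    have h2 : 2^(k+2) = 4 * 2^k := by ring
    have h3 : 2^(k+1+2) = 2 * 2^(k+2) := by ring
    nlinarith [ih, h1, h2, h3]

set_option maxHeartbeats 1000000 in
theorem saint_petersburg_stmt18 (x : ℝ) (hx : x ∈ Set.Ioc (0 : ℝ) 1)
    (α : ℝ) (hα : 1 ≤ α) (n : ℕ → ℕ) (hn : ∀ k, 1 ≤ n k)
    (hdig : ∀ j, 1 ≤ j →
      (eps j x = 1 ↔ ∃ ℓ : ℕ, j = ∑ k ∈ Finset.range (ℓ + 1), n k))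
    (hlim : Filter.Tendsto
      (fun ℓ : ℕ =>
        ((∑ k ∈ Finset.range ℓ, (2 : ℝ) ^ (n k)) - ℓ) /
          ((∑ k ∈ Finset.range ℓ, n k : ℕ) : ℝ))
      Filter.atTop (nhds α)) :
    Filter.Tendsto
      (fun ℓ : ℕ => (2 : ℝ) ^ (n ℓ) / ((∑ k ∈ Finset.range ℓ, n k : ℕ) : ℝ))
      Filter.atTop (nhds 0) ∧
    Filter.Tendsto (fun m : ℕ => S m x / m) Filter.atTop (nhds α) := by
  set N : ℕ → ℕ := fun ℓ => ∑ k ∈ Finset.range ℓ, n k with hNdef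
  set B : ℕ → ℝ := fun ℓ => (∑ k ∈ Finset.range ℓ, (2:ℝ)^(n k)) - ℓ with hBdef
  set A : ℕ → ℝ := fun ℓ => B ℓ / (N ℓ : ℝ) with hAdef
  have hlimA : Filter.Tendsto A Filter.atTop (nhds α) := hlim
  have hNsucc : ∀ ℓ, N (ℓ+1) = N ℓ + n ℓ := fun ℓ => Finset.sum_range_succ n ℓ
  have hNmono : StrictMono N := strictMono_nat_of_lt_succ (fun ℓ => by
    rw [hNsucc]; have := hn ℓ; omega)
  have hNge : ∀ ℓ, ℓ ≤ N ℓ := by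
    intro ℓ
    calc ℓ = ∑ k ∈ Finset.range ℓ, 1 := by simp
      _ ≤ N ℓ := Finset.sum_le_sum (fun k _ => hn k)
  have hNtop : Filter.Tendsto (fun ℓ => (N ℓ : ℝ)) Filter.atTop Filter.atTop := by
    apply tendsto_natCast_atTop_atTop.comp
    exact tendsto_atTop_mono hNge tendsto_id
  have hNpos : ∀ ℓ, 1 ≤ ℓ → (0:ℝ) < N ℓ := by
    intro ℓ hℓ
    have := hNge ℓ
    have : 1 ≤ N ℓ := le_trans hℓ this
    exact_mod_cast Nat.lt_of_lt_of_le Nat.zero_lt_one this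
  have hBsucc : ∀ ℓ, B (ℓ+1) = B ℓ + 2^(n ℓ) - 1 := by
    intro ℓ
    simp only [hBdef, Finset.sum_range_succ]
    push_cast
    ring
  have hBA : ∀ ℓ, 1 ≤ ℓ → B ℓ = A ℓ * N ℓ := by
    intro ℓ hℓ
    have h : (N ℓ:ℝ) ≠ 0 := ne_of_gt (hNpos ℓ hℓ)
    rw [hAdef]
    field_simp
  have hkey : ∀ ℓ, 1 ≤ ℓ → (2:ℝ)^(n ℓ) = 1 + (A (ℓ+1) - A ℓ) * N ℓ + A (ℓ+1) * n ℓ := by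
    intro ℓ hℓ
    have h1 := hBsucc ℓ
    have h2 := hBA ℓ hℓ
    have h3 := hBA (ℓ+1) (by omega)
    rw [h2] at h1
    rw [h3] at h1
    have h4 : (N (ℓ+1) : ℝ) = N ℓ + n ℓ := by rw [hNsucc]; push_cast; ring
    rw [h4] at h1
    nlinarith [h1]
  -- Step (a): n ℓ / N ℓ → 0
  have hBnd : ∀ ℓ, (n ℓ:ℝ)^2 ≤ 4 * 2^(n ℓ) := by
    intro ℓ
    have := sq_le_two_pow (n ℓ)
    have h2 : (2:ℝ)^(n ℓ + 2) = 4 * 2^(n ℓ) := by ring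
    calc ((n ℓ:ℝ))^2 = ((n ℓ ^2 : ℕ) : ℝ) := by push_cast; ring
      _ ≤ ((2^(n ℓ + 2) : ℕ) : ℝ) := by exact_mod_cast this
      _ = 4 * 2^(n ℓ) := by push_cast; ring
  have hstepa : Filter.Tendsto (fun ℓ => (n ℓ : ℝ) / (N ℓ : ℝ)) Filter.atTop (nhds 0) := by
    rw [Metric.tendsto_atTop]
    intro ε hε
    have hε2 : 0 < ε/2 := by linarith
    -- A is eventually within 1 of α
    obtain ⟨L1, hL1⟩ := (Metric.tendsto_atTop.1 hlimA) 1 one_pos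
    set K : ℝ := 4 + 16/ε + 4*(α+1) with hK
    have hKpos : 0 < K := by positivity
    obtain ⟨L2, hL2⟩ := Filter.eventually_atTop.1 ((Filter.tendsto_atTop.1 hNtop) (max (4*K/ε) 1))
    refine ⟨max (L1+1) (L2+1), fun ℓ hℓ => ?_⟩
    have hℓ1 : L1 ≤ ℓ := by omega
    have hℓ1' : L1 ≤ ℓ+1 := by omega
    have hℓ2 : L2 ≤ ℓ := by omega
    have hℓpos : 1 ≤ ℓ := by omega
    have hNl : (0:ℝ) < N ℓ := hNpos ℓ hℓpos
    have hNbig : max (4*K/ε) 1 ≤ (N ℓ:ℝ) := hL2 ℓ hℓ2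
    have hA1 : |A ℓ - α| < 1 := by have := hL1 ℓ hℓ1; rwa [Real.dist_eq] at this
    have hA2 : |A (ℓ+1) - α| < 1 := by have := hL1 (ℓ+1) hℓ1'; rwa [Real.dist_eq] at this
    have hkk := hkey ℓ hℓpos
    have hAub : A (ℓ+1) ≤ α + 1 := by
      have := abs_lt.1 hA2; linarith [this.2]
    have hAd : |A (ℓ+1) - A ℓ| < 2 := by
      have h1 := abs_lt.1 hA1; have h2 := abs_lt.1 hA2
      rw [abs_lt]; constructor <;> linarith [h1.1, h1.2, h2.1, h2.2]
    have hnn : (1:ℝ) ≤ n ℓ := by exact_mod_cast hn ℓ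
    have hpow : (2:ℝ)^(n ℓ) ≤ 1 + 2 * N ℓ + (α+1) * n ℓ := by
      rw [hkk]
      have := abs_lt.1 hAd
      nlinarith [hNl.le, hnn, this.1, this.2, hAub]
    -- claim: n ℓ ≤ (ε/2) * N ℓ
    have hclaim : (n ℓ : ℝ) ≤ (ε/2) * N ℓ := by
      by_contra hc
      push_neg at hc
      have hq : (n ℓ:ℝ)^2 ≤ 4 + 8 * N ℓ + 4*(α+1) * n ℓ := by
        have := hBnd ℓ
        nlinarith [hpow]
      have hNlt : ε * (N ℓ:ℝ) < 2 * n ℓ := by linarith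
      have h8 : 8 * (N ℓ:ℝ) * ε < 16 * n ℓ := by nlinarith [hNlt]
      have h1 : ε * (n ℓ:ℝ)^2 ≤ ε*4 + 8*(N ℓ:ℝ)*ε + 4*(α+1)*(n ℓ)*ε := by nlinarith [hq, hε]
      have hdn : ε * (n ℓ:ℝ) * (16/ε) = 16 * n ℓ := by field_simp
      have h2 : ε * (n ℓ:ℝ)^2 ≤ (ε * n ℓ) * K := by
        rw [hK, mul_add, mul_add, hdn]
        have h9 : ε*4 ≤ ε*(n ℓ:ℝ)*4 := by nlinarith [hnn, hε]
        have h10 : (0:ℝ) ≤ ε * n ℓ := by positivity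
        nlinarith [h1, h8, h9, h10]
      have hnK : (n ℓ:ℝ) ≤ K := by
        have hεn : (0:ℝ) < ε * n ℓ := by positivity
        have h3 : (ε * n ℓ) * n ℓ ≤ (ε * n ℓ) * K := by nlinarith [h2]
        exact (mul_le_mul_iff_right₀ hεn).1 h3
      have hNK : 4*K/ε ≤ (N ℓ:ℝ) := le_trans (le_max_left _ _) hNbig
      have h4 : 4*K ≤ ε * N ℓ := by
        rw [div_le_iff₀ hε] at hNK; linarith [hNK]
      have h5 : ε * (N ℓ:ℝ) < 2 * K := by linarith [hc, hnK]
      linarith [hKpos]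
    rw [Real.dist_eq, sub_zero, abs_of_nonneg (by positivity)]
    rw [div_lt_iff₀ hNl]
    calc (n ℓ:ℝ) ≤ (ε/2) * N ℓ := hclaim
      _ < ε * N ℓ := by nlinarith [hNl, hε]
  -- Goal 1
  have hAsucc : Filter.Tendsto (fun ℓ => A (ℓ+1)) Filter.atTop (nhds α) :=
    hlimA.comp (tendsto_add_atTop_nat 1)
  have hinv : Filter.Tendsto (fun ℓ => ((N ℓ:ℝ))⁻¹) Filter.atTop (nhds 0) :=
    hNtop.inv_tendsto_atTop
  have hgoal1 : Filter.Tendsto (fun ℓ => (2:ℝ)^(n ℓ) / (N ℓ:ℝ)) Filter.atTop (nhds 0) := by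
    have hrhs : Filter.Tendsto
        (fun ℓ => ((N ℓ:ℝ)⁻¹ + (A (ℓ+1) - A ℓ)) + A (ℓ+1) * ((n ℓ:ℝ)/(N ℓ:ℝ)))
        Filter.atTop (nhds ((0 + (α - α)) + α * 0)) :=
      (hinv.add (hAsucc.sub hlimA)).add (hAsucc.mul hstepa)
    have h0 : ((0:ℝ) + (α - α)) + α * 0 = 0 := by ring
    rw [h0] at hrhs
    apply Filter.Tendsto.congr' _ hrhs
    filter_upwards [Filter.eventually_ge_atTop 1] with ℓ hℓ
    have hNl : (0:ℝ) < N ℓ := hNpos ℓ hℓ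
    rw [hkey ℓ hℓ]
    field_simp
    try ring
  -- the dynamical identity
  have hS : ∀ ℓ, S (N ℓ) x = B ℓ := by
    intro ℓ
    induction ℓ with
    | zero => norm_num [hNdef, hBdef, S]
    | succ ℓ ih =>
      have hsplit : S (N (ℓ+1)) x
          = S (N ℓ) x + ∑ j ∈ Finset.range (n ℓ), phi (T^[N ℓ + j] x) := by
        simp only [S, hNsucc ℓ, Finset.sum_range_add]
      obtain ⟨p, hp⟩ : ∃ p, n ℓ = p + 1 := ⟨n ℓ - 1, by have := hn ℓ; omega⟩
      set y := T^[N ℓ] x with hy0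
      have hy : y ∈ Set.Ioc (0:ℝ) 1 := iter_mem hx _
      have hiter : ∀ j, T^[N ℓ + j] x = T^[j] y := by
        intro j
        rw [hy0, show N ℓ + j = j + N ℓ from by omega, Function.iterate_add_apply]
      have hepsy : ∀ i, 1 ≤ i → eps i y = eps (N ℓ + i) x := fun i hi =>
        eps_shift hi (N ℓ) x
      have hz : ∀ i, 1 ≤ i → i ≤ p → eps i y ≠ 1 := by
        intro i hi hip hcon
        rw [hepsy i hi] at hcon
        obtain ⟨m, hm⟩ := (hdig (N ℓ + i) (by omega)).1 hcon
        have hm' : N ℓ + i = N (m+1) := hm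
        have h1 : N ℓ < N (m+1) := by omega
        have h2 : ℓ < m+1 := hNmono.lt_iff_lt.1 h1
        have h3 : N (ℓ+1) ≤ N (m+1) := hNmono.monotone (by omega)
        rw [hNsucc] at h3
        omega
      have h1e : eps (p+1) y = 1 := by
        rw [hepsy (p+1) (by omega)]
        refine (hdig (N ℓ + (p+1)) (by omega)).2 ⟨ℓ, ?_⟩
        show N ℓ + (p+1) = N (ℓ+1)
        rw [hNsucc, hp]
      have hsum := sum_first p y hy hz h1e
      have hsum2 : ∑ j ∈ Finset.range (n ℓ), phi (T^[N ℓ + j] x) = 2^(p+1) - 1 := by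
        rw [hp, ← hsum]
        exact Finset.sum_congr rfl (fun j _ => by rw [hiter j])
      rw [hsplit, ih, hsum2, hBsucc, hp]
      ring
  -- monotonicity of S
  have hSmono : ∀ a b : ℕ, a ≤ b → S a x ≤ S b x := by
    intro a b hab
    apply Finset.sum_le_sum_of_subset_of_nonneg (Finset.range_subset_range.2 hab)
    intro i _ _
    exact (phi_pos _).le
  have hB0 : ∀ ℓ, 0 ≤ B ℓ := by
    intro ℓ
    have h1 : ∀ k ∈ Finset.range ℓ, ((1:ℝ)) ≤ 2^(n k) := by
      intro k _
      have : (2:ℝ)^(0:ℕ) ≤ 2^(n k) := pow_le_pow_right₀ (by norm_num) (Nat.zero_le _)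
      simpa using this
    have : (ℓ:ℝ) ≤ ∑ k ∈ Finset.range ℓ, (2:ℝ)^(n k) := by
      calc (ℓ:ℝ) = ∑ k ∈ Finset.range ℓ, (1:ℝ) := by simp
        _ ≤ _ := Finset.sum_le_sum h1
    simp only [hBdef]
    linarith
  -- the index function L
  set L : ℕ → ℕ := fun m => Nat.findGreatest (fun ℓ => N ℓ ≤ m) m with hLdef
  have hL1 : ∀ m, N (L m) ≤ m := by
    intro m
    have hP0 : N 0 ≤ m := by simp [hNdef]
    exact Nat.findGreatest_spec (P := fun ℓ => N ℓ ≤ m) (Nat.zero_le m) hP0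
  have hL2 : ∀ m, m < N (L m + 1) := by
    intro m
    by_cases h : L m + 1 ≤ m
    · by_contra hc
      push_neg at hc
      exact Nat.findGreatest_is_greatest (Nat.lt_succ_self _) h hc
    · push_neg at h
      have := hNge (L m + 1)
      omega
  have hLtop : Filter.Tendsto L Filter.atTop Filter.atTop := by
    rw [Filter.tendsto_atTop]
    intro b
    filter_upwards [Filter.eventually_ge_atTop (N b)] with m hm
    exact Nat.le_findGreatest (le_trans (hNge b) hm) hm
  -- tendsto of bounds
  have hg2 : Filter.Tendsto (fun ℓ => B (ℓ+1) / (N ℓ:ℝ)) Filter.atTop (nhds α) := by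
    have hrhs : Filter.Tendsto (fun ℓ => A (ℓ+1) * (1 + (n ℓ:ℝ)/(N ℓ:ℝ)))
        Filter.atTop (nhds (α * (1 + 0))) := hAsucc.mul (tendsto_const_nhds.add hstepa)
    rw [show α * (1 + 0) = α from by ring] at hrhs
    apply Filter.Tendsto.congr' _ hrhs
    filter_upwards [Filter.eventually_ge_atTop 1] with ℓ hℓ
    have hNl : (0:ℝ) < N ℓ := hNpos ℓ hℓ
    rw [hBA (ℓ+1) (by omega), show ((N (ℓ+1):ℕ):ℝ) = (N ℓ:ℝ) + (n ℓ:ℝ) from by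
      rw [hNsucc]; push_cast; ring]
    field_simp
    try ring
  have hg1 : Filter.Tendsto (fun ℓ => B ℓ / (N (ℓ+1):ℝ)) Filter.atTop (nhds α) := by
    have hrhs : Filter.Tendsto (fun ℓ => A ℓ * (1 + (n ℓ:ℝ)/(N ℓ:ℝ))⁻¹)
        Filter.atTop (nhds (α * (1 + 0)⁻¹)) :=
      hlimA.mul ((tendsto_const_nhds.add hstepa).inv₀ (by norm_num))
    rw [show α * ((1:ℝ) + 0)⁻¹ = α from by norm_num] at hrhs
    apply Filter.Tendsto.congr' _ hrhs
    filter_upwards [Filter.eventually_ge_atTop 1] with ℓ hℓ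
    have hNl : (0:ℝ) < N ℓ := hNpos ℓ hℓ
    have hNl1 : (0:ℝ) < (N (ℓ+1):ℝ) := hNpos (ℓ+1) (by omega)
    rw [hBA ℓ hℓ, show ((N (ℓ+1):ℕ):ℝ) = (N ℓ:ℝ) + (n ℓ:ℝ) from by
      rw [hNsucc]; push_cast; ring]
    rw [show ((N (ℓ+1):ℕ):ℝ) = (N ℓ:ℝ) + (n ℓ:ℝ) from by
      rw [hNsucc]; push_cast; ring] at hNl1
    rw [one_add_div (ne_of_gt hNl), inv_div]
    field_simp
    try ring
  -- squeeze
  refine ⟨hgoal1, ?_⟩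
  apply tendsto_of_tendsto_of_tendsto_of_le_of_le' (hg1.comp hLtop) (hg2.comp hLtop)
  · filter_upwards [Filter.eventually_ge_atTop (max (N 1) 1)] with m hm
    have hm1 : 1 ≤ m := le_trans (le_max_right _ _) hm
    have hmN : N 1 ≤ m := le_trans (le_max_left _ _) hm
    have hLm : 1 ≤ L m := Nat.le_findGreatest (le_trans (hNge 1) hmN) hmN
    have hmpos : (0:ℝ) < m := by exact_mod_cast hm1
    have hNL1pos : (0:ℝ) < (N (L m + 1):ℝ) := hNpos _ (by omega)
    simp only [Function.comp_apply]
    have hSlow : B (L m) ≤ S m x := by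
      rw [← hS (L m)]
      exact hSmono _ _ (hL1 m)
    have hmle : (m:ℝ) ≤ (N (L m + 1):ℝ) := by exact_mod_cast (hL2 m).le
    rw [div_le_div_iff₀ hNL1pos hmpos]
    nlinarith [hB0 (L m), hSlow, hmle, hmpos]
  · filter_upwards [Filter.eventually_ge_atTop (max (N 1) 1)] with m hm
    have hm1 : 1 ≤ m := le_trans (le_max_right _ _) hm
    have hmN : N 1 ≤ m := le_trans (le_max_left _ _) hm
    have hLm : 1 ≤ L m := Nat.le_findGreatest (le_trans (hNge 1) hmN) hmN
    have hmpos : (0:ℝ) < m := by exact_mod_cast hm1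
    have hNLpos : (0:ℝ) < (N (L m):ℝ) := hNpos _ hLm
    simp only [Function.comp_apply]
    have hShigh : S m x ≤ B (L m + 1) := by
      rw [← hS (L m + 1)]
      exact hSmono _ _ (hL2 m).le
    have hmge : (N (L m):ℝ) ≤ (m:ℝ) := by exact_mod_cast hL1 m
    have hS0 : 0 ≤ S m x :=
      Finset.sum_nonneg (fun i _ => (phi_pos _).le)
    rw [div_le_div_iff₀ hmpos hNLpos]
    nlinarith [hShigh, hmge, hS0, hB0 (L m + 1)]
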